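/- If G is a good graph containing a cycle, then every vertex of G has degree at least 2. -/

import Mathlib

/-- Number of k-nearly independent vertex subsets: subsets whose induced subgraph has exactly k edges. -/
def sigmaK {V : Type*} [Fintype V] [DecidableEq V] (G : SimpleGraph V) [DecidableRel G.Adj] (k : ℕ) : ℕ :=
  (Finset.univ.filter fun s : Finset V =>
    (s.sym2.filter fun e => e ∈ G.edgeSet).card = k).card

/-- A graph is good if for every edge uv, N[u] ∪ N[v] = V(G). -/
def IsGoodGraph {V : Type*} (G : SimpleGraph V) : Prop :=
  ∀ u v : V, G.Adj u v →
    (insert u (G.neighborSet u)) ∪ (insert v (G.neighborSet v)) = Set.univ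

/-- Two distinct neighbors give degree at least 2. -/
lemma two_le_degree_of_two_adj {V : Type*} [Fintype V] (G : SimpleGraph V)
    [DecidableRel G.Adj] {v p q : V} (hpq : p ≠ q) (h1 : G.Adj v p) (h2 : G.Adj v q) :
    2 ≤ G.degree v := by
  classical
  have hsub : ({p, q} : Finset V) ⊆ G.neighborFinset v := by
    intro x hx
    simp only [Finset.mem_insert, Finset.mem_singleton] at hx
    rcases hx with rfl | rfl <;> simp [h1, h2]
  calc 2 = ({p, q} : Finset V).card := (Finset.card_pair hpq).symm
    _ ≤ (G.neighborFinset v).card := Finset.card_le_card hsub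
    _ = G.degree v := (G.card_neighborFinset_eq_degree v)

/-- Key lemma: in a good graph, any vertex adjacent to a vertex lying on a cycle
has degree at least 2. -/
lemma key {V : Type*} [Fintype V] (G : SimpleGraph V) [DecidableRel G.Adj]
    (hgood : IsGoodGraph G) {x v : V} (c : G.Walk x x) (hc : c.IsCycle)
    (hxv : G.Adj x v) : 2 ≤ G.degree v := by
  classical
  match c, hc with
  | SimpleGraph.Walk.nil, hc => exact absurd hc.three_le_length (by simp)
  | SimpleGraph.Walk.cons h SimpleGraph.Walk.nil, hc =>
      exact absurd hc.three_le_length (by simp)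
  | SimpleGraph.Walk.cons (v := y) h (SimpleGraph.Walk.cons (v := z) h2 q), hc =>
      -- h : G.Adj x y, h2 : G.Adj y z
      have hnodup := hc.isTrail.edges_nodup
      simp only [SimpleGraph.Walk.edges_cons, List.nodup_cons, List.mem_cons] at hnodup
      have hzx : z ≠ x := by
        rintro rfl
        exact hnodup.1 (Or.inl (Sym2.eq_swap))
      have hxy : x ≠ y := h.ne
      have hyz : y ≠ z := h2.ne
      have hv : v ∈ (insert y (G.neighborSet y)) ∪ (insert z (G.neighborSet z)) := by
        rw [hgood y z h2]; trivial
      rcases hv with hv | hv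
      · rcases Set.mem_insert_iff.mp hv with rfl | hv
        · exact two_le_degree_of_two_adj G hzx.symm hxv.symm h2
        · exact two_le_degree_of_two_adj G hxy hxv.symm (SimpleGraph.mem_neighborSet .. |>.mp hv).symm
      · rcases Set.mem_insert_iff.mp hv with rfl | hv
        · exact two_le_degree_of_two_adj G hxy hxv.symm h2.symm
        · exact two_le_degree_of_two_adj G hzx.symm hxv.symm (SimpleGraph.mem_neighborSet .. |>.mp hv).symm

theorem stmt6 {V : Type*} [Fintype V] (G : SimpleGraph V) [DecidableRel G.Adj]
    (hgood : IsGoodGraph G) (hcyc : ¬ G.IsAcyclic) :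
    ∀ v : V, 2 ≤ G.degree v := by
  classical
  rw [SimpleGraph.IsAcyclic] at hcyc
  push_neg at hcyc
  obtain ⟨a, c, hc⟩ := hcyc
  intro v
  -- first edge of c
  match c, hc with
  | SimpleGraph.Walk.nil, hc => exact absurd hc.three_le_length (by simp)
  | SimpleGraph.Walk.cons (v := b) h p, hc =>
      -- h : G.Adj a b
      have hbmem : b ∈ (SimpleGraph.Walk.cons h p).support := by
        simp [SimpleGraph.Walk.support_cons]
      have hcb : ((SimpleGraph.Walk.cons h p).rotate b hbmem).IsCycle := hc.rotate hbmem
      have hv : v ∈ (insert a (G.neighborSet a)) ∪ (insert b (G.neighborSet b)) := by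
        rw [hgood a b h]; trivial
      rcases hv with hv | hv
      · rcases Set.mem_insert_iff.mp hv with rfl | hv
        · exact key G hgood _ hcb h.symm
        · exact key G hgood _ hc (SimpleGraph.mem_neighborSet .. |>.mp hv)
      · rcases Set.mem_insert_iff.mp hv with rfl | hv
        · exact key G hgood _ hc h
        · exact key G hgood _ hcb (SimpleGraph.mem_neighborSet .. |>.mp hv)
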